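/- Assume hypotheses (EC) and (UC). Let τ ∈ [0,T). Then M(τ,r) < M^τ for every r > 0; r = r(M(τ,r),τ) for every r ∈ (0,r_T]; and M = M(τ,r(M,τ)) for every M ∈ [0,M^τ). Consequently the map r ↦ M(τ,r) on (0,r_T] is the inverse of the map M ↦ r(M,τ) on [0,M^τ). -/

import Mathlib

open MeasureTheory Set Filter Topology

noncomputable section

variable {H : Type*} [NormedAddCommGroup H] [InnerProductSpace ℂ H] [CompleteSpace H]
  [SecondCountableTopology H]

/-- `U` is a strongly continuous one-parameter group of unitary operators on `H`,
abstracting the Schrödinger group `e^{-iΔt}`. -/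
def IsUnitaryGroup (U : ℝ → H →L[ℂ] H) : Prop :=
  U 0 = ContinuousLinearMap.id ℂ H ∧
  (∀ s t : ℝ, U (s + t) = (U s).comp (U t)) ∧
  (∀ (t : ℝ) (x : H), ‖U t x‖ = ‖x‖) ∧
  ∀ x : H, Continuous fun t : ℝ => U t x

/-- `B` is a nonzero orthogonal projection on `H`, abstracting multiplication by `χ_ω`. -/
def IsOrthProj (B : H →L[ℂ] H) : Prop :=
  B ≠ 0 ∧ B.comp B = B ∧ ∀ x y : H, (inner ℂ (B x) y : ℂ) = inner ℂ x (B y)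

/-- Membership in `L∞((a,b);H)`. -/
def MemLinfty (u : ℝ → H) (a b : ℝ) : Prop :=
  AEStronglyMeasurable u (volume : Measure ℝ) ∧
    ∃ c : ℝ, ∀ᵐ t : ℝ ∂volume, t ∈ Ioo a b → ‖u t‖ ≤ c

/-- Membership in `L∞((0,∞);H)`. -/
def MemLinftyInf (u : ℝ → H) : Prop :=
  AEStronglyMeasurable u (volume : Measure ℝ) ∧
    ∃ c : ℝ, ∀ᵐ t : ℝ ∂volume, t ∈ Ioi (0 : ℝ) → ‖u t‖ ≤ c

/-- The `L∞((a,b);H)` norm of `u`. -/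
def supNorm (u : ℝ → H) (a b : ℝ) : ℝ :=
  sInf {c : ℝ | 0 ≤ c ∧ ∀ᵐ t : ℝ ∂volume, t ∈ Ioo a b → ‖u t‖ ≤ c}

/-- `stateT U B T τ u y₀ = y(T; χ_{(τ,T)}u, y₀)`, the mild solution at time `T` of the
controlled Schrödinger equation with initial state `y₀`, the control acting on `(τ,T)`:
`y(T) = U(T)y₀ + ∫_τ^T U(T-s) B u(s) ds`.  The free state at time `t` starting from `y₀`
with control `u` active from time `0` is `stateT U B t 0 u y₀`. -/
def stateT (U : ℝ → H →L[ℂ] H) (B : H →L[ℂ] H) (T τ : ℝ) (u : ℝ → H) (y₀ : H) : H :=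
  U T y₀ + ∫ s in Ioo τ T, U (T - s) (B (u s))

/-- Hypothesis (EC): `L∞`-exact controllability with cost. -/
def EC (U : ℝ → H →L[ℂ] H) (B : H →L[ℂ] H) : Prop :=
  ∀ τ : ℝ, 0 < τ → ∃ C : ℝ, 0 < C ∧ ∀ y₀ z : H, ∃ u : ℝ → H,
    AEStronglyMeasurable u (volume : Measure ℝ) ∧
    (∀ᵐ t : ℝ ∂volume, t ∈ Ioo 0 τ → ‖u t‖ ≤ C * ‖z - U τ y₀‖) ∧
    stateT U B τ 0 u y₀ = z

/-- Hypothesis (UC): unique continuation. -/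
def UC (U : ℝ → H →L[ℂ] H) (B : H →L[ℂ] H) : Prop :=
  ∀ η : H, η ≠ 0 → volume {t : ℝ | B (U t η) = 0} = 0

/-- The admissible set `U_M` of the minimal time problem `(TOCP)_M`. -/
def UMset (U : ℝ → H →L[ℂ] H) (B : H →L[ℂ] H) (y₀ : H) (M : ℝ) : Set (ℝ → H) :=
  {u | MemLinftyInf u ∧ (∀ᵐ t : ℝ ∂volume, t ∈ Ioi (0 : ℝ) → ‖u t‖ ≤ M) ∧
    ∃ s : ℝ, 0 < s ∧ stateT U B s 0 u y₀ = 0}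

/-- The minimal time `T_M` of `(TOCP)_M`. -/
def Tmin (U : ℝ → H →L[ℂ] H) (B : H →L[ℂ] H) (y₀ : H) (M : ℝ) : ℝ :=
  sInf {s : ℝ | 0 < s ∧ ∃ u ∈ UMset U B y₀ M, stateT U B s 0 u y₀ = 0}

/-- The admissible set `V_T` of the minimal norm problem `(NOCP)_T`. -/
def VTset (U : ℝ → H →L[ℂ] H) (B : H →L[ℂ] H) (y₀ : H) (T : ℝ) : Set (ℝ → H) :=
  {v | MemLinfty v 0 T ∧ stateT U B T 0 v y₀ = 0}

/-- The minimal norm `M_T` of `(NOCP)_T`. -/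
def Mmin (U : ℝ → H →L[ℂ] H) (B : H →L[ℂ] H) (y₀ : H) (T : ℝ) : ℝ :=
  sInf ((fun v : ℝ → H => supNorm v 0 T) '' VTset U B y₀ T)

/-- Hypothesis (BB): bang-bang property of the minimal time problems. -/
def BB (U : ℝ → H →L[ℂ] H) (B : H →L[ℂ] H) : Prop :=
  ∀ y₀ : H, y₀ ≠ 0 → ∀ M : ℝ, 0 < M → ∀ u ∈ UMset U B y₀ M,
    stateT U B (Tmin U B y₀ M) 0 u y₀ = 0 →
    ∀ᵐ t : ℝ ∂volume, t ∈ Ioo 0 (Tmin U B y₀ M) → ‖u t‖ = M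

/-- Hypothesis (ET): existence of optimal controls for the minimal time problems. -/
def ET (U : ℝ → H →L[ℂ] H) (B : H →L[ℂ] H) : Prop :=
  ∀ y₀ : H, y₀ ≠ 0 → ∀ M : ℝ, 0 < M →
    ∃ u ∈ UMset U B y₀ M, stateT U B (Tmin U B y₀ M) 0 u y₀ = 0

/-- The admissible set `U_{M,τ}`. -/
def UadmSet (M τ T : ℝ) : Set (ℝ → H) :=
  {u | MemLinfty u 0 T ∧ ∀ᵐ t : ℝ ∂volume, t ∈ Ioo τ T → ‖u t‖ ≤ M}

/-- The optimal distance `r(M,τ)` of the optimal target problem `(OP)^{M,τ}`. -/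
def rOP (U : ℝ → H →L[ℂ] H) (B : H →L[ℂ] H) (y₀ z_d : H) (T M τ : ℝ) : ℝ :=
  sInf ((fun u : ℝ → H => ‖stateT U B T τ u y₀ - z_d‖) '' UadmSet M τ T)

/-- `u` is an optimal control to `(OP)^{M,τ}`. -/
def IsOptOP (U : ℝ → H →L[ℂ] H) (B : H →L[ℂ] H) (y₀ z_d : H) (T M τ : ℝ) (u : ℝ → H) :
    Prop :=
  u ∈ UadmSet M τ T ∧ ‖stateT U B T τ u y₀ - z_d‖ = rOP U B y₀ z_d T M τ

/-- `M^τ`, the minimal norm for exact steering to the target `z_d`. -/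
def Mtau (U : ℝ → H →L[ℂ] H) (B : H →L[ℂ] H) (y₀ z_d : H) (T τ : ℝ) : ℝ :=
  sInf ((fun u : ℝ → H => supNorm u τ T) ''
    {u : ℝ → H | MemLinfty u 0 T ∧ stateT U B T τ u y₀ = z_d})

/-- The admissible set `W_{τ,r}` of the optimal norm problem `(NP)^{τ,r}`. -/
def WadmSet (U : ℝ → H →L[ℂ] H) (B : H →L[ℂ] H) (y₀ z_d : H) (T τ r : ℝ) :
    Set (ℝ → H) :=
  {u | MemLinfty u 0 T ∧ ‖stateT U B T τ u y₀ - z_d‖ ≤ r}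

/-- The optimal norm `M(τ,r)` of `(NP)^{τ,r}`. -/
def MNP (U : ℝ → H →L[ℂ] H) (B : H →L[ℂ] H) (y₀ z_d : H) (T τ r : ℝ) : ℝ :=
  sInf ((fun u : ℝ → H => supNorm u τ T) '' WadmSet U B y₀ z_d T τ r)

/-- `u` is an optimal control to `(NP)^{τ,r}`. -/
def IsOptNP (U : ℝ → H →L[ℂ] H) (B : H →L[ℂ] H) (y₀ z_d : H) (T τ r : ℝ) (u : ℝ → H) :
    Prop :=
  u ∈ WadmSet U B y₀ z_d T τ r ∧ supNorm u τ T = MNP U B y₀ z_d T τ r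

/-- The admissible set `V_{M,r}` of the second type optimal time problem `(TP)^{M,r}`. -/
def VadmSet (U : ℝ → H →L[ℂ] H) (B : H →L[ℂ] H) (y₀ z_d : H) (T M r : ℝ) :
    Set (ℝ → H) :=
  {u | ∃ τ : ℝ, τ ∈ Ico (0 : ℝ) T ∧ u ∈ UadmSet M τ T ∧
    ‖stateT U B T τ u y₀ - z_d‖ ≤ r}

/-- `τ_{M,r}(u)`. -/
def tauOf (U : ℝ → H →L[ℂ] H) (B : H →L[ℂ] H) (y₀ z_d : H) (T r : ℝ) (u : ℝ → H) : ℝ :=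
  sSup {τ : ℝ | τ ∈ Ico (0 : ℝ) T ∧ ‖stateT U B T τ u y₀ - z_d‖ ≤ r}

/-- The optimal time `τ(M,r)` of `(TP)^{M,r}`. -/
def tauTP (U : ℝ → H →L[ℂ] H) (B : H →L[ℂ] H) (y₀ z_d : H) (T M r : ℝ) : ℝ :=
  sSup (tauOf U B y₀ z_d T r '' VadmSet U B y₀ z_d T M r)

/-- `u` is an optimal control to `(TP)^{M,r}`. -/
def IsOptTP (U : ℝ → H →L[ℂ] H) (B : H →L[ℂ] H) (y₀ z_d : H) (T M r : ℝ) (u : ℝ → H) :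
    Prop :=
  u ∈ VadmSet U B y₀ z_d T M r ∧
    ‖stateT U B T (tauTP U B y₀ z_d T M r) u y₀ - z_d‖ ≤ r

/-- The adjoint state `φ*(t) = U(t-T)(z_d - y(T; χ_{(τ,T)}u, y₀))`. -/
def adjState (U : ℝ → H →L[ℂ] H) (B : H →L[ℂ] H) (y₀ z_d : H) (T τ : ℝ) (u : ℝ → H)
    (t : ℝ) : H :=
  U (t - T) (z_d - stateT U B T τ u y₀)

set_option linter.unusedSectionVars false

section Infra

variable {H : Type*} [NormedAddCommGroup H] [InnerProductSpace ℂ H] [CompleteSpace H]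
  [SecondCountableTopology H]

lemma supNorm_nonneg (u : ℝ → H) (a b : ℝ) : 0 ≤ supNorm u a b :=
  Real.sInf_nonneg (fun _ hc => hc.1)

lemma supNorm_le {u : ℝ → H} {a b c : ℝ} (hc : 0 ≤ c)
    (h : ∀ᵐ t : ℝ ∂volume, t ∈ Ioo a b → ‖u t‖ ≤ c) : supNorm u a b ≤ c :=
  csInf_le ⟨0, fun _ hx => hx.1⟩ ⟨hc, h⟩

lemma ae_le_supNorm {u : ℝ → H} {a b c : ℝ}
    (h : ∀ᵐ t : ℝ ∂volume, t ∈ Ioo a b → ‖u t‖ ≤ c) :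
    ∀ᵐ t : ℝ ∂volume, t ∈ Ioo a b → ‖u t‖ ≤ supNorm u a b := by
  set S : Set ℝ := {c : ℝ | 0 ≤ c ∧ ∀ᵐ t : ℝ ∂volume, t ∈ Ioo a b → ‖u t‖ ≤ c} with hS
  have hne : S.Nonempty := ⟨max c 0, le_max_right _ _, by
    filter_upwards [h] with t ht hts; exact (ht hts).trans (le_max_left _ _)⟩
  have key : ∀ n : ℕ, ∀ᵐ t : ℝ ∂volume, t ∈ Ioo a b → ‖u t‖ ≤ sInf S + 1 / (n + 1) := by
    intro n
    have hlt : sInf S < sInf S + 1 / (n + 1) :=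
      lt_add_of_pos_right _ (by positivity)
    obtain ⟨c', hc', hlt'⟩ := exists_lt_of_csInf_lt hne hlt
    filter_upwards [hc'.2] with t ht hts
    exact (ht hts).trans hlt'.le
  rw [← ae_all_iff] at key
  filter_upwards [key] with t ht hts
  have hb : ∀ n : ℕ, ‖u t‖ ≤ sInf S + 1 / (n + 1) := fun n => ht n hts
  show ‖u t‖ ≤ sInf S
  by_contra hcon
  push_neg at hcon
  obtain ⟨n, hn⟩ := exists_nat_one_div_lt (sub_pos.mpr hcon)
  linarith [hb n]

lemma contF {U : ℝ → H →L[ℂ] H} (hU : IsUnitaryGroup U) (B : H →L[ℂ] H) (T : ℝ) :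
    Continuous fun p : ℝ × H => U (T - p.1) (B p.2) := by
  rw [continuous_iff_continuousAt]
  rintro ⟨s₀, x₀⟩
  have hdecomp : (fun p : ℝ × H => U (T - p.1) (B p.2)) =
      (fun p : ℝ × H => U (T - p.1) (B p.2 - B x₀) + U (T - p.1) (B x₀)) := by
    funext p; rw [map_sub, sub_add_cancel]
  rw [ContinuousAt, hdecomp]
  have h1 : Filter.Tendsto (fun p : ℝ × H => U (T - p.1) (B p.2 - B x₀))
      (nhds (s₀, x₀)) (nhds 0) := by
    apply squeeze_zero_norm (a := fun p : ℝ × H => ‖B p.2 - B x₀‖)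
    · intro p; rw [hU.2.2.1]
    · have hc : Continuous (fun p : ℝ × H => ‖B p.2 - B x₀‖) :=
        ((B.continuous.comp continuous_snd).sub continuous_const).norm
      have := hc.tendsto (s₀, x₀)
      simpa using this
  have h2 : Filter.Tendsto (fun p : ℝ × H => U (T - p.1) (B x₀))
      (nhds (s₀, x₀)) (nhds (U (T - s₀) (B x₀))) := by
    have hc : Continuous (fun s : ℝ => U (T - s) (B x₀)) :=
      (hU.2.2.2 (B x₀)).comp (continuous_const.sub continuous_id)
    exact (hc.comp continuous_fst).tendsto (s₀, x₀)
  have := h1.add h2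
  simpa using this

lemma aesm_integrand {U : ℝ → H →L[ℂ] H} (hU : IsUnitaryGroup U) (B : H →L[ℂ] H) (T : ℝ)
    {u : ℝ → H} (hu : AEStronglyMeasurable u (volume : Measure ℝ)) :
    AEStronglyMeasurable (fun s => U (T - s) (B (u s))) (volume : Measure ℝ) :=
  (contF hU B T).comp_aestronglyMeasurable (aestronglyMeasurable_id.prodMk hu)

lemma integrableOn_integrand {U : ℝ → H →L[ℂ] H} (hU : IsUnitaryGroup U) (B : H →L[ℂ] H)
    (T : ℝ) {u : ℝ → H} {a b c : ℝ}
    (hu : AEStronglyMeasurable u (volume : Measure ℝ))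
    (h : ∀ᵐ t : ℝ ∂volume, t ∈ Ioo a b → ‖u t‖ ≤ c) :
    IntegrableOn (fun s => U (T - s) (B (u s))) (Ioo a b) volume := by
  refine ⟨(aesm_integrand hU B T hu).restrict, ?_⟩
  apply HasFiniteIntegral.restrict_of_bounded (C := ‖B‖ * c)
  · rw [Real.volume_Ioo]; exact ENNReal.ofReal_lt_top
  · rw [ae_restrict_iff' measurableSet_Ioo]
    filter_upwards [h] with t ht hts
    rw [hU.2.2.1]
    exact (B.le_opNorm _).trans (by
      have h0 : 0 ≤ ‖B‖ := norm_nonneg _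
      exact mul_le_mul_of_nonneg_left (ht hts) h0)

lemma J_norm_le {U : ℝ → H →L[ℂ] H} (hU : IsUnitaryGroup U) (B : H →L[ℂ] H)
    (T : ℝ) {u : ℝ → H} {a b c : ℝ} (hab : a ≤ b)
    (h : ∀ᵐ t : ℝ ∂volume, t ∈ Ioo a b → ‖u t‖ ≤ c) :
    ‖∫ s in Ioo a b, U (T - s) (B (u s))‖ ≤ ‖B‖ * c * (b - a) := by
  have hbound : ∀ᵐ t : ℝ ∂volume, t ∈ Ioo a b → ‖U (T - t) (B (u t))‖ ≤ ‖B‖ * c := by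
    filter_upwards [h] with t ht hts
    rw [hU.2.2.1]
    exact (B.le_opNorm _).trans (mul_le_mul_of_nonneg_left (ht hts) (norm_nonneg _))
  have := norm_setIntegral_le_of_norm_le_const_ae'
    (by rw [Real.volume_Ioo]; exact ENNReal.ofReal_lt_top) hbound
  calc ‖∫ s in Ioo a b, U (T - s) (B (u s))‖ ≤ ‖B‖ * c * (volume (Ioo a b)).toReal := this
    _ = ‖B‖ * c * (b - a) := by rw [Real.volume_Ioo, ENNReal.toReal_ofReal (by linarith)]

end Infra

section Infra2

variable {H : Type*} [NormedAddCommGroup H] [InnerProductSpace ℂ H] [CompleteSpace H]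
  [SecondCountableTopology H]

lemma J_add {U : ℝ → H →L[ℂ] H} (B : H →L[ℂ] H) (T τ : ℝ) {u v : ℝ → H}
    (hu : IntegrableOn (fun s => U (T - s) (B (u s))) (Ioo τ T) volume)
    (hv : IntegrableOn (fun s => U (T - s) (B (v s))) (Ioo τ T) volume) :
    ∫ s in Ioo τ T, U (T - s) (B (u s + v s)) =
      (∫ s in Ioo τ T, U (T - s) (B (u s))) + ∫ s in Ioo τ T, U (T - s) (B (v s)) := by
  have h : ∀ s, U (T - s) (B (u s + v s)) = U (T - s) (B (u s)) + U (T - s) (B (v s)) := by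
    intro s; rw [map_add, map_add]
  simp_rw [h]
  exact integral_add hu hv

lemma J_smul {U : ℝ → H →L[ℂ] H} (B : H →L[ℂ] H) (T τ : ℝ) (u : ℝ → H) (a : ℝ) :
    ∫ s in Ioo τ T, U (T - s) (B (a • u s)) =
      a • ∫ s in Ioo τ T, U (T - s) (B (u s)) := by
  have h : ∀ s, U (T - s) (B (a • u s)) = a • U (T - s) (B (u s)) := by
    intro s; rw [B.map_smul_of_tower, (U (T - s)).map_smul_of_tower]
  simp_rw [h]
  exact integral_smul a _

lemma steer {U : ℝ → H →L[ℂ] H} (B : H →L[ℂ] H)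
    (hEC : EC U B) {T τ : ℝ} (hτT : τ < T) :
    ∃ C : ℝ, 0 < C ∧ ∀ z : H, ∃ v : ℝ → H,
      AEStronglyMeasurable v (volume : Measure ℝ) ∧
      (∀ᵐ t : ℝ ∂volume, ‖v t‖ ≤ C * ‖z‖) ∧
      (∫ s in Ioo τ T, U (T - s) (B (v s))) = z := by
  obtain ⟨C, hC, hCall⟩ := hEC (T - τ) (by linarith)
  refine ⟨C, hC, fun z => ?_⟩
  obtain ⟨v0, hv0am, hv0bd, hv0st⟩ := hCall 0 z
  have hv0bd' : ∀ᵐ t : ℝ ∂volume, t ∈ Ioo 0 (T - τ) → ‖v0 t‖ ≤ C * ‖z‖ := by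
    simpa using hv0bd
  have hint : (∫ σ in Ioo 0 (T - τ), U ((T - τ) - σ) (B (v0 σ))) = z := by
    have := hv0st
    simp only [stateT, map_zero, zero_add] at this
    exact this
  set v : ℝ → H := (Set.Ioo τ T).indicator (fun t => v0 (t - τ)) with hv
  have hmp := (measurePreserving_sub_right (volume : Measure ℝ) τ).quasiMeasurePreserving
  refine ⟨v, ?_, ?_, ?_⟩
  · exact (hv0am.comp_quasiMeasurePreserving hmp).indicator measurableSet_Ioo
  · have hpull : ∀ᵐ t : ℝ ∂volume, (t - τ) ∈ Ioo 0 (T - τ) → ‖v0 (t - τ)‖ ≤ C * ‖z‖ :=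
      hmp.ae hv0bd'
    filter_upwards [hpull] with t ht
    by_cases hmem : t ∈ Ioo τ T
    · rw [hv, indicator_of_mem hmem]
      exact ht ⟨by simp [hmem.1], by simp; linarith [hmem.2]⟩
    · rw [hv, indicator_of_notMem hmem]
      simp only [norm_zero]
      positivity
  · have hcongr : ∫ s in Ioo τ T, U (T - s) (B (v s)) =
        ∫ s in Ioo τ T, U ((T - τ) - (s - τ)) (B (v0 (s - τ))) := by
      apply setIntegral_congr_fun measurableSet_Ioo
      intro s hs
      have harith : T - τ - (s - τ) = T - s := by ring
      simp only [hv, indicator_of_mem hs, harith]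
    rw [hcongr]
    have h1 : ∫ s in Ioo τ T, U ((T - τ) - (s - τ)) (B (v0 (s - τ))) =
        ∫ s in τ..T, U ((T - τ) - (s - τ)) (B (v0 (s - τ))) := by
      rw [intervalIntegral.integral_of_le hτT.le, integral_Ioc_eq_integral_Ioo]
    have h2 : ∫ s in τ..T, U ((T - τ) - (s - τ)) (B (v0 (s - τ))) =
        ∫ σ in (τ - τ)..(T - τ), U ((T - τ) - σ) (B (v0 σ)) :=
      intervalIntegral.integral_comp_sub_right (fun σ => U ((T - τ) - σ) (B (v0 σ))) τ
    rw [h1, h2, sub_self, intervalIntegral.integral_of_le (by linarith),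
      integral_Ioc_eq_integral_Ioo]
    exact hint

end Infra2
set_option maxHeartbeats 2000000 in
theorem rop_mnp_inverse
    (U : ℝ → H →L[ℂ] H) (B : H →L[ℂ] H) (hU : IsUnitaryGroup U) (hB : IsOrthProj B)
    (hEC : EC U B) (hECrev : EC (fun t => U (-t)) B)
    (hUC : UC U B)
    (T : ℝ) (hT : 0 < T) (y₀ z_d : H) (hrT : 0 < ‖U T y₀ - z_d‖)
    (τ : ℝ) (hτ : τ ∈ Ico (0 : ℝ) T) :
    (∀ r : ℝ, 0 < r → MNP U B y₀ z_d T τ r < Mtau U B y₀ z_d T τ) ∧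
    (∀ r ∈ Ioc (0 : ℝ) ‖U T y₀ - z_d‖, rOP U B y₀ z_d T (MNP U B y₀ z_d T τ r) τ = r) ∧
    (∀ M ∈ Ico (0 : ℝ) (Mtau U B y₀ z_d T τ), MNP U B y₀ z_d T τ (rOP U B y₀ z_d T M τ) = M) ∧
    InvOn (fun r => MNP U B y₀ z_d T τ r) (fun M => rOP U B y₀ z_d T M τ)
      (Ico (0 : ℝ) (Mtau U B y₀ z_d T τ)) (Ioc (0 : ℝ) ‖U T y₀ - z_d‖) := by
  obtain ⟨hτ0, hτT⟩ := hτ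
  have hTτ : 0 < T - τ := sub_pos.mpr hτT
  have hBpos : (0:ℝ) < ‖B‖ := norm_pos_iff.mpr hB.1
  obtain ⟨C, hC, hsteer0⟩ := steer B hEC hτT
  set rT := ‖U T y₀ - z_d‖ with hrTdef
  set J : (ℝ → H) → H := fun u => ∫ s in Ioo τ T, U (T - s) (B (u s)) with hJdef
  have hstate : ∀ u : ℝ → H, stateT U B T τ u y₀ = U T y₀ + J u := fun _ => rfl
  -- basic L∞ facts
  have hmemB : ∀ u : ℝ → H, MemLinfty u 0 T →
      ∃ c, 0 ≤ c ∧ ∀ᵐ t : ℝ ∂volume, t ∈ Ioo τ T → ‖u t‖ ≤ c := by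
    rintro u ⟨hm, c, hc⟩
    refine ⟨max c 0, le_max_right _ _, ?_⟩
    filter_upwards [hc] with t ht hts
    exact le_trans (ht ⟨lt_of_le_of_lt hτ0 hts.1, hts.2⟩) (le_max_left _ _)
  have haesup : ∀ u : ℝ → H, MemLinfty u 0 T →
      ∀ᵐ t : ℝ ∂volume, t ∈ Ioo τ T → ‖u t‖ ≤ supNorm u τ T := by
    intro u hu; obtain ⟨c, _, hc⟩ := hmemB u hu; exact ae_le_supNorm hc
  have hintJ : ∀ u : ℝ → H, MemLinfty u 0 T →
      IntegrableOn (fun s => U (T - s) (B (u s))) (Ioo τ T) volume := by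
    intro u hu; obtain ⟨c, _, hc⟩ := hmemB u hu
    exact integrableOn_integrand hU B T hu.1 hc
  have hJnorm : ∀ u : ℝ → H, MemLinfty u 0 T →
      ‖J u‖ ≤ ‖B‖ * supNorm u τ T * (T - τ) := by
    intro u hu; exact J_norm_le hU B T hτT.le (haesup u hu)
  have hJadd : ∀ u v : ℝ → H, MemLinfty u 0 T → MemLinfty v 0 T →
      J (u + v) = J u + J v := by
    intro u v hu hv
    have h1 : J (u + v) = ∫ s in Ioo τ T, U (T - s) (B (u s + v s)) := rfl
    rw [h1, J_add B T τ (hintJ u hu) (hintJ v hv)]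
  have hJsmul : ∀ (u : ℝ → H) (a : ℝ), J (a • u) = a • J u := by
    intro u a
    have h1 : J (a • u) = ∫ s in Ioo τ T, U (T - s) (B (a • u s)) := rfl
    rw [h1, J_smul]
  have hmem_add : ∀ u v : ℝ → H, MemLinfty u 0 T → MemLinfty v 0 T →
      MemLinfty (u + v) 0 T := by
    rintro u v ⟨hma, ca, hca⟩ ⟨hmb, cb, hcb⟩
    refine ⟨hma.add hmb, ca + cb, ?_⟩
    filter_upwards [hca, hcb] with t h1 h2 hts
    exact (norm_add_le _ _).trans (add_le_add (h1 hts) (h2 hts))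
  have hmem_smul : ∀ (u : ℝ → H) (a : ℝ), MemLinfty u 0 T → MemLinfty (a • u) 0 T := by
    rintro u a ⟨hm, c, hc⟩
    refine ⟨hm.const_smul a, ‖a‖ * c, ?_⟩
    filter_upwards [hc] with t h1 hts
    rw [Pi.smul_apply, norm_smul]
    exact mul_le_mul_of_nonneg_left (h1 hts) (norm_nonneg a)
  have hmem_zero : MemLinfty (0 : ℝ → H) 0 T :=
    ⟨aestronglyMeasurable_const, 0, by filter_upwards with t _; simp⟩
  have hJzero : J (0 : ℝ → H) = 0 := by
    have h1 : J (0 : ℝ → H) = ∫ s in Ioo τ T, U (T - s) (B (0 : H)) := rfl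
    rw [h1]; simp
  -- steering on (τ,T)
  have hsteer : ∀ z : H, ∃ v : ℝ → H, MemLinfty v 0 T ∧
      (∀ᵐ t : ℝ ∂volume, t ∈ Ioo τ T → ‖v t‖ ≤ C * ‖z‖) ∧ J v = z := by
    intro z
    obtain ⟨v, hvm, hvb, hvi⟩ := hsteer0 z
    exact ⟨v, ⟨hvm, C * ‖z‖, by filter_upwards [hvb] with t h _; exact h⟩,
      by filter_upwards [hvb] with t h _; exact h, hvi⟩
  -- definitional unfoldings
  have hrOPdef : ∀ M : ℝ, rOP U B y₀ z_d T M τ =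
      sInf ((fun u : ℝ → H => ‖stateT U B T τ u y₀ - z_d‖) '' UadmSet M τ T) := fun _ => rfl
  have hMNPdef : ∀ r : ℝ, MNP U B y₀ z_d T τ r =
      sInf ((fun u : ℝ → H => supNorm u τ T) '' WadmSet U B y₀ z_d T τ r) := fun _ => rfl
  have hMtaudef : Mtau U B y₀ z_d T τ =
      sInf ((fun u : ℝ → H => supNorm u τ T) ''
        {u : ℝ → H | MemLinfty u 0 T ∧ stateT U B T τ u y₀ = z_d}) := rfl
  -- bddBelow of images
  have hbddS : ∀ S : Set (ℝ → H), BddBelow ((fun u : ℝ → H => supNorm u τ T) '' S) :=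
    fun S => ⟨0, by rintro x ⟨u, _, rfl⟩; exact supNorm_nonneg u τ T⟩
  have hbddD : ∀ S : Set (ℝ → H),
      BddBelow ((fun u : ℝ → H => ‖stateT U B T τ u y₀ - z_d‖) '' S) :=
    fun S => ⟨0, by rintro x ⟨u, _, rfl⟩; exact norm_nonneg _⟩
  -- an exact control
  obtain ⟨ue, huem, hueb, huei⟩ := hsteer (z_d - U T y₀)
  have hueE : ue ∈ {u : ℝ → H | MemLinfty u 0 T ∧ stateT U B T τ u y₀ = z_d} :=
    ⟨huem, by rw [hstate, huei]; abel⟩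
  have hEne : ((fun u : ℝ → H => supNorm u τ T) ''
      {u : ℝ → H | MemLinfty u 0 T ∧ stateT U B T τ u y₀ = z_d}).Nonempty :=
    ⟨supNorm ue τ T, ⟨ue, hueE, rfl⟩⟩
  -- Mtau positive
  have hMtau_pos : 0 < Mtau U B y₀ z_d T τ := by
    have hm0 : (0:ℝ) < rT / (‖B‖ * (T - τ)) := by positivity
    refine lt_of_lt_of_le hm0 ?_
    rw [hMtaudef]
    refine le_csInf hEne ?_
    rintro x ⟨u, hu, rfl⟩
    show rT / (‖B‖ * (T - τ)) ≤ supNorm u τ T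
    have hJu : J u = z_d - U T y₀ := by
      have h2 := hu.2; rw [hstate] at h2
      rw [← h2]; abel
    have hn : rT ≤ ‖B‖ * supNorm u τ T * (T - τ) := by
      have h3 := hJnorm u hu.1
      rw [hJu] at h3
      calc rT = ‖z_d - U T y₀‖ := by rw [hrTdef, norm_sub_rev]
        _ ≤ _ := h3
    rw [div_le_iff₀ (by positivity)]
    nlinarith [supNorm_nonneg u τ T]
  -- zero is admissible
  have h0Uadm : ∀ M : ℝ, 0 ≤ M → (0 : ℝ → H) ∈ UadmSet (H := H) M τ T := by
    intro M hM
    exact ⟨hmem_zero, by filter_upwards with t _; simp [hM]⟩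
  have hstate0 : stateT U B T τ (0 : ℝ → H) y₀ = U T y₀ := by
    rw [hstate, hJzero, add_zero]
  have hrOPne : ∀ M : ℝ, 0 ≤ M →
      ((fun u : ℝ → H => ‖stateT U B T τ u y₀ - z_d‖) '' UadmSet M τ T).Nonempty := by
    intro M hM
    refine ⟨rT, 0, h0Uadm M hM, ?_⟩
    show ‖stateT U B T τ (0 : ℝ → H) y₀ - z_d‖ = rT
    rw [hstate0]
  have hrOP_nonneg : ∀ M : ℝ, 0 ≤ rOP U B y₀ z_d T M τ := by
    intro M; rw [hrOPdef]
    exact Real.sInf_nonneg (by rintro x ⟨u, _, rfl⟩; exact norm_nonneg _)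
  have hrOP_le_rT : ∀ M : ℝ, 0 ≤ M → rOP U B y₀ z_d T M τ ≤ rT := by
    intro M hM
    rw [hrOPdef]
    refine csInf_le (hbddD _) ⟨0, h0Uadm M hM, ?_⟩
    show ‖stateT U B T τ (0 : ℝ → H) y₀ - z_d‖ = rT
    rw [hstate0]
  have hMNP_nonneg : ∀ r : ℝ, 0 ≤ MNP U B y₀ z_d T τ r := by
    intro r; rw [hMNPdef]
    exact Real.sInf_nonneg (by rintro x ⟨u, _, rfl⟩; exact supNorm_nonneg u τ T)
  have hWne : ∀ r : ℝ, 0 ≤ r →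
      ((fun u : ℝ → H => supNorm u τ T) '' WadmSet U B y₀ z_d T τ r).Nonempty := by
    intro r hr
    refine ⟨supNorm ue τ T, ue, ⟨hueE.1, ?_⟩, rfl⟩
    rw [hueE.2]; simpa using hr
  have hrOP0 : rOP U B y₀ z_d T 0 τ = rT := by
    apply le_antisymm (hrOP_le_rT 0 le_rfl)
    rw [hrOPdef]
    refine le_csInf (hrOPne 0 le_rfl) ?_
    rintro x ⟨u, hu, rfl⟩
    show rT ≤ ‖stateT U B T τ u y₀ - z_d‖
    have hu0 : ∀ᵐ s ∂(volume.restrict (Ioo τ T)), U (T - s) (B (u s)) = 0 := by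
      rw [ae_restrict_iff' measurableSet_Ioo]
      filter_upwards [hu.2] with t ht hts
      have h4 : u t = 0 := norm_le_zero_iff.mp (ht hts)
      simp [h4]
    have hJu : J u = 0 := by
      have h1 : J u = ∫ s in Ioo τ T, U (T - s) (B (u s)) := rfl
      rw [h1, integral_eq_zero_of_ae hu0]
    rw [hstate, hJu, add_zero]
  have hrOP_anti : ∀ M₁ M₂ : ℝ, 0 ≤ M₁ → M₁ ≤ M₂ →
      rOP U B y₀ z_d T M₂ τ ≤ rOP U B y₀ z_d T M₁ τ := by
    intro M₁ M₂ h1 h12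
    rw [hrOPdef, hrOPdef]
    apply csInf_le_csInf (hbddD _) (hrOPne M₁ h1)
    apply image_mono
    rintro u ⟨hum, hub⟩
    exact ⟨hum, by filter_upwards [hub] with t ht hts; exact (ht hts).trans h12⟩
  -- scaling inequality
  have hscale : ∀ M M' : ℝ, 0 < M → M ≤ M' →
      rOP U B y₀ z_d T M τ ≤ (M / M') * rOP U B y₀ z_d T M' τ + (1 - M / M') * rT := by
    intro M M' hM hMM'
    have hM' : 0 < M' := lt_of_lt_of_le hM hMM'
    set θ := M / M' with hθdef
    have hθ0 : 0 < θ := by positivity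
    have hθ1 : θ ≤ 1 := (div_le_one hM').mpr hMM'
    apply le_of_forall_pos_le_add
    intro ε hε
    obtain ⟨x, ⟨u', hu', rfl⟩, hx⟩ := exists_lt_of_csInf_lt (hrOPne M' hM'.le)
      (show sInf _ < rOP U B y₀ z_d T M' τ + ε / θ by
        rw [← hrOPdef]; exact lt_add_of_pos_right _ (by positivity))
    have hxd : ‖stateT U B T τ u' y₀ - z_d‖ < rOP U B y₀ z_d T M' τ + ε / θ := hx
    set w : ℝ → H := θ • u' with hwdef
    have hwmem : w ∈ UadmSet (H := H) M τ T := by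
      refine ⟨hmem_smul u' θ hu'.1, ?_⟩
      filter_upwards [hu'.2] with t ht hts
      rw [hwdef, Pi.smul_apply, norm_smul, Real.norm_eq_abs, abs_of_pos hθ0]
      calc θ * ‖u' t‖ ≤ θ * M' := mul_le_mul_of_nonneg_left (ht hts) hθ0.le
        _ = M := by rw [hθdef]; field_simp
    have hwd : stateT U B T τ w y₀ - z_d =
        θ • (stateT U B T τ u' y₀ - z_d) + (1 - θ) • (U T y₀ - z_d) := by
      rw [hstate w, hwdef, hJsmul, hstate u']
      module
    have hnorm : ‖stateT U B T τ w y₀ - z_d‖ ≤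
        θ * ‖stateT U B T τ u' y₀ - z_d‖ + (1 - θ) * rT := by
      rw [hwd]
      refine (norm_add_le _ _).trans ?_
      rw [norm_smul, norm_smul, Real.norm_eq_abs, Real.norm_eq_abs,
        abs_of_pos hθ0, abs_of_nonneg (by linarith)]
    have hle : rOP U B y₀ z_d T M τ ≤ ‖stateT U B T τ w y₀ - z_d‖ := by
      rw [hrOPdef]; exact csInf_le (hbddD _) ⟨w, hwmem, rfl⟩
    have h5 : θ * ‖stateT U B T τ u' y₀ - z_d‖ ≤
        θ * (rOP U B y₀ z_d T M' τ + ε / θ) :=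
      mul_le_mul_of_nonneg_left hxd.le hθ0.le
    have h6 : θ * (rOP U B y₀ z_d T M' τ + ε / θ) =
        θ * rOP U B y₀ z_d T M' τ + ε := by
      rw [mul_add, mul_div_cancel₀ _ (ne_of_gt hθ0)]
    linarith
  -- MNP lower bound below rT
  have hMNPpos : ∀ r : ℝ, 0 ≤ r → r < rT →
      (rT - r) / (‖B‖ * (T - τ)) ≤ MNP U B y₀ z_d T τ r := by
    intro r hr hrlt
    rw [hMNPdef]
    refine le_csInf (hWne r hr) ?_
    rintro x ⟨u, ⟨hum, hud⟩, rfl⟩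
    show (rT - r) / (‖B‖ * (T - τ)) ≤ supNorm u τ T
    have hkey : rT ≤ ‖stateT U B T τ u y₀ - z_d‖ + ‖J u‖ := by
      have h1 : U T y₀ - z_d = (stateT U B T τ u y₀ - z_d) - J u := by
        rw [hstate]; abel
      calc rT = ‖(stateT U B T τ u y₀ - z_d) - J u‖ := by rw [hrTdef, ← h1]
        _ ≤ _ := norm_sub_le _ _
    have h2 := hJnorm u hum
    rw [div_le_iff₀ (by positivity)]
    nlinarith [supNorm_nonneg u τ T]
  -- Claim 1
  have hC1 : ∀ r : ℝ, 0 < r → MNP U B y₀ z_d T τ r < Mtau U B y₀ z_d T τ := by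
    intro r hr
    set lam := min 1 (r / rT) with hlamdef
    have hlam0 : 0 < lam := lt_min one_pos (by positivity)
    have hlam1 : lam ≤ 1 := min_le_left _ _
    have hkey : MNP U B y₀ z_d T τ r ≤ (1 - lam) * Mtau U B y₀ z_d T τ := by
      apply le_of_forall_pos_le_add
      intro ε hε
      obtain ⟨x, ⟨u, hu, rfl⟩, hx⟩ := exists_lt_of_csInf_lt hEne
        (show sInf _ < Mtau U B y₀ z_d T τ + ε by
          rw [← hMtaudef]; exact lt_add_of_pos_right _ hε)
      have hxd : supNorm u τ T < Mtau U B y₀ z_d T τ + ε := hx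
      set w : ℝ → H := (1 - lam) • u with hwdef
      have hJu : J u = z_d - U T y₀ := by
        have h2 := hu.2; rw [hstate] at h2
        rw [← h2]; abel
      have hwd : stateT U B T τ w y₀ - z_d = (-lam) • (z_d - U T y₀) := by
        rw [hstate w, hwdef, hJsmul, hJu]
        module
      have hwdist : ‖stateT U B T τ w y₀ - z_d‖ ≤ r := by
        rw [hwd, norm_smul, Real.norm_eq_abs, abs_neg, abs_of_pos hlam0,
          norm_sub_rev]
        have h3 : lam ≤ r / rT := min_le_right _ _
        calc lam * rT ≤ (r / rT) * rT := mul_le_mul_of_nonneg_right h3 hrT.le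
          _ = r := by field_simp
      have hwW : w ∈ WadmSet U B y₀ z_d T τ r := ⟨hmem_smul u _ hu.1, hwdist⟩
      have hwsup : supNorm w τ T ≤ (1 - lam) * (Mtau U B y₀ z_d T τ + ε) := by
        apply supNorm_le (by nlinarith [hMtau_pos])
        filter_upwards [haesup u hu.1] with t ht hts
        rw [hwdef, Pi.smul_apply, norm_smul, Real.norm_eq_abs,
          abs_of_nonneg (by linarith)]
        exact mul_le_mul_of_nonneg_left ((ht hts).trans hxd.le) (by linarith)
      have hfin : MNP U B y₀ z_d T τ r ≤ supNorm w τ T := by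
        rw [hMNPdef]; exact csInf_le (hbddS _) ⟨w, hwW, rfl⟩
      nlinarith [mul_nonneg hlam0.le hε.le]
    nlinarith [mul_pos hlam0 hMtau_pos]
  -- Claim 2
  have hC2 : ∀ r : ℝ, 0 < r → r ≤ rT →
      rOP U B y₀ z_d T (MNP U B y₀ z_d T τ r) τ = r := by
    intro r hr hrle
    set Ms := MNP U B y₀ z_d T τ r with hMsdef
    have hMs0 : 0 ≤ Ms := hMNP_nonneg r
    have hge : r ≤ rOP U B y₀ z_d T Ms τ := by
      by_contra hlt
      push_neg at hlt
      rcases eq_or_lt_of_le hMs0 with hMs00 | hMspos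
      · rw [← hMs00, hrOP0] at hlt
        linarith
      · obtain ⟨x, ⟨u, hu, rfl⟩, hx⟩ := exists_lt_of_csInf_lt (hrOPne Ms hMs0)
          (show sInf _ < r by rw [← hrOPdef]; exact hlt)
        have hxd : ‖stateT U B T τ u y₀ - z_d‖ < r := hx
        set d := ‖stateT U B T τ u y₀ - z_d‖ with hddef
        set δ := min (1/2 : ℝ) ((r - d) / (‖J u‖ + 1)) with hδdef
        have hδ0 : 0 < δ := lt_min (by norm_num)
          (div_pos (by linarith) (by positivity))
        have hδhalf : δ ≤ 1/2 := min_le_left _ _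
        have hδJ : δ * (‖J u‖ + 1) ≤ r - d := by
          have h1 : δ ≤ (r - d) / (‖J u‖ + 1) := min_le_right _ _
          rw [← le_div_iff₀ (by positivity)]
          exact h1
        set w : ℝ → H := (1 - δ) • u with hwdef
        have hwd : stateT U B T τ w y₀ - z_d =
            (stateT U B T τ u y₀ - z_d) - δ • J u := by
          rw [hstate w, hwdef, hJsmul, hstate u]
          module
        have hwdist : ‖stateT U B T τ w y₀ - z_d‖ ≤ r := by
          rw [hwd]
          refine (norm_sub_le _ _).trans ?_
          rw [norm_smul, Real.norm_eq_abs, abs_of_pos hδ0]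
          have h7 : ‖stateT U B T τ u y₀ - z_d‖ = d := rfl
          rw [h7]
          nlinarith [norm_nonneg (J u)]
        have hwW : w ∈ WadmSet U B y₀ z_d T τ r := ⟨hmem_smul u _ hu.1, hwdist⟩
        have hwsup : supNorm w τ T ≤ (1 - δ) * Ms := by
          apply supNorm_le (by nlinarith)
          filter_upwards [hu.2] with t ht hts
          rw [hwdef, Pi.smul_apply, norm_smul, Real.norm_eq_abs,
            abs_of_nonneg (by linarith)]
          exact mul_le_mul_of_nonneg_left (ht hts) (by linarith)
        have hcon : Ms ≤ (1 - δ) * Ms := by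
          have h8 : MNP U B y₀ z_d T τ r ≤ supNorm w τ T := by
            rw [hMNPdef]; exact csInf_le (hbddS _) ⟨w, hwW, rfl⟩
          calc Ms = MNP U B y₀ z_d T τ r := hMsdef
            _ ≤ supNorm w τ T := h8
            _ ≤ (1 - δ) * Ms := hwsup
        nlinarith
    have hle : rOP U B y₀ z_d T Ms τ ≤ r := by
      rcases le_or_gt rT r with hr_rT | hr_rT
      · exact (hrOP_le_rT Ms hMs0).trans hr_rT
      · have hMspos : 0 < Ms := lt_of_lt_of_le (div_pos (by linarith) (by positivity)) (hMNPpos r hr.le hr_rT)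
        apply le_of_forall_pos_le_add
        intro ε hε
        set ε'' := min Ms (ε * Ms / rT) with hε''def
        have hε''0 : 0 < ε'' := lt_min hMspos (by positivity)
        obtain ⟨x, ⟨u, hu, rfl⟩, hx⟩ := exists_lt_of_csInf_lt (hWne r hr.le)
          (show sInf _ < Ms + ε'' by
            rw [← hMNPdef, ← hMsdef]; exact lt_add_of_pos_right _ hε''0)
        have hxd : supNorm u τ T < Ms + ε'' := hx
        have huU : u ∈ UadmSet (H := H) (Ms + ε'') τ T := by
          refine ⟨hu.1, ?_⟩
          filter_upwards [haesup u hu.1] with t ht hts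
          exact (ht hts).trans hxd.le
        have hROP1 : rOP U B y₀ z_d T (Ms + ε'') τ ≤ r := by
          have h9 : rOP U B y₀ z_d T (Ms + ε'') τ ≤ ‖stateT U B T τ u y₀ - z_d‖ := by
            rw [hrOPdef]; exact csInf_le (hbddD _) ⟨u, huU, rfl⟩
          exact h9.trans hu.2
        have hsc := hscale Ms (Ms + ε'') hMspos (by linarith)
        set θ := Ms / (Ms + ε'') with hθdef
        have hsum : 0 < Ms + ε'' := by linarith
        have hθ1 : θ ≤ 1 := (div_le_one hsum).mpr (by linarith)
        have hθ0 : 0 < θ := by positivity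
        have hA : θ * rOP U B y₀ z_d T (Ms + ε'') τ ≤ r :=
          le_trans (mul_le_of_le_one_left (hrOP_nonneg _) hθ1) hROP1
        have hB' : (1 - θ) * rT ≤ ε := by
          have h1 : 1 - θ = ε'' / (Ms + ε'') := by
            rw [hθdef]; field_simp; ring
          have h2 : ε'' ≤ ε * Ms / rT := min_le_right _ _
          have h3 : ε'' * rT ≤ ε * Ms := by
            rw [← le_div_iff₀ hrT]; exact h2
          rw [h1, div_mul_eq_mul_div, div_le_iff₀ hsum]
          nlinarith
        linarith
    linarith
  -- Claim 3
  have hC3 : ∀ M : ℝ, 0 ≤ M → M < Mtau U B y₀ z_d T τ →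
      MNP U B y₀ z_d T τ (rOP U B y₀ z_d T M τ) = M := by
    intro M hM0 hMlt
    rcases eq_or_lt_of_le hM0 with hM00 | hMpos
    · rw [← hM00, hrOP0]
      apply le_antisymm _ (hMNP_nonneg rT)
      have hsup0 : supNorm (0 : ℝ → H) τ T = 0 :=
        le_antisymm (supNorm_le le_rfl (by filter_upwards with t _; simp))
          (supNorm_nonneg _ τ T)
      rw [hMNPdef]
      refine csInf_le (hbddS _) ⟨0, ⟨hmem_zero, ?_⟩, hsup0⟩
      rw [hstate0]
    · set r := rOP U B y₀ z_d T M τ with hrdef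
      have hrle : r ≤ rT := hrOP_le_rT M hM0
      have hrpos : 0 < r := by
        rcases lt_or_ge 0 r with h | h
        · exact h
        · exfalso
          have hr0 : r = 0 := le_antisymm h (hrOP_nonneg M)
          have hMtau_le : Mtau U B y₀ z_d T τ ≤ M := by
            apply le_of_forall_pos_le_add
            intro ρ hρ
            obtain ⟨x, ⟨u, hu, rfl⟩, hx⟩ := exists_lt_of_csInf_lt (hrOPne M hM0)
              (show sInf _ < ρ / C by
                rw [← hrOPdef, ← hrdef, hr0]; positivity)
            have hxd : ‖stateT U B T τ u y₀ - z_d‖ < ρ / C := hx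
            obtain ⟨v, hvm, hvb, hvi⟩ := hsteer (z_d - stateT U B T τ u y₀)
            have hwE : u + v ∈ {w : ℝ → H | MemLinfty w 0 T ∧
                stateT U B T τ w y₀ = z_d} := by
              refine ⟨hmem_add u v hu.1 hvm, ?_⟩
              rw [hstate (u + v), hJadd u v hu.1 hvm, hvi, hstate u]
              abel
            have hwsup : supNorm (u + v) τ T ≤ M + ρ := by
              apply supNorm_le (by linarith)
              filter_upwards [hu.2, hvb] with t h1 h2 hts
              have h3 : ‖v t‖ ≤ C * ‖z_d - stateT U B T τ u y₀‖ := h2 hts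
              have h4 : ‖z_d - stateT U B T τ u y₀‖ < ρ / C := by
                rw [norm_sub_rev]; exact hxd
              calc ‖(u + v) t‖ ≤ ‖u t‖ + ‖v t‖ := norm_add_le _ _
                _ ≤ M + C * ‖z_d - stateT U B T τ u y₀‖ := add_le_add (h1 hts) h3
                _ ≤ M + ρ := by
                    have h8 : C * ‖z_d - stateT U B T τ u y₀‖ ≤ C * (ρ / C) :=
                      mul_le_mul_of_nonneg_left h4.le hC.le
                    have h9 : C * (ρ / C) = ρ := by field_simp
                    linarith
            rw [hMtaudef]
            exact le_trans (csInf_le (hbddS _) ⟨u + v, hwE, rfl⟩) hwsup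
          linarith
      have hMle : MNP U B y₀ z_d T τ r ≤ M := by
        apply le_of_forall_pos_le_add
        intro ε hε
        obtain ⟨x, ⟨u, hu, rfl⟩, hx⟩ := exists_lt_of_csInf_lt (hrOPne M hM0)
          (show sInf _ < r + ε / C by
            rw [← hrOPdef, ← hrdef]; exact lt_add_of_pos_right _ (by positivity))
        have hxd : ‖stateT U B T τ u y₀ - z_d‖ < r + ε / C := hx
        set d := ‖stateT U B T τ u y₀ - z_d‖ with hddef
        rcases le_or_gt d r with hdr | hdr
        · have huW : u ∈ WadmSet U B y₀ z_d T τ r := ⟨hu.1, hdr⟩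
          have h5 : MNP U B y₀ z_d T τ r ≤ supNorm u τ T := by
            rw [hMNPdef]; exact csInf_le (hbddS _) ⟨u, huW, rfl⟩
          have hsupM : supNorm u τ T ≤ M := supNorm_le hM0 hu.2
          linarith
        · have hdpos : 0 < d := lt_trans hrpos hdr
          obtain ⟨v, hvm, hvb, hvi⟩ :=
            hsteer ((1 - r / d) • (z_d - stateT U B T τ u y₀))
          have hznorm : ‖(1 - r / d) • (z_d - stateT U B T τ u y₀)‖ = d - r := by
            rw [norm_smul, Real.norm_eq_abs, norm_sub_rev,
              abs_of_nonneg (by rw [sub_nonneg, div_le_one hdpos]; exact hdr.le)]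
            have h7 : ‖stateT U B T τ u y₀ - z_d‖ = d := rfl
            rw [h7]
            field_simp [ne_of_gt hdpos]
          have hwd : stateT U B T τ (u + v) y₀ - z_d =
              (r / d) • (stateT U B T τ u y₀ - z_d) := by
            have hd1 : d ≠ 0 := ne_of_gt hdpos
            rw [hstate (u + v), hJadd u v hu.1 hvm, hvi, hstate u]
            match_scalars <;> field_simp <;> ring
          have hwdist : ‖stateT U B T τ (u + v) y₀ - z_d‖ ≤ r := by
            have h7 : ‖stateT U B T τ u y₀ - z_d‖ = d := rfl
            rw [hwd, norm_smul, Real.norm_eq_abs, abs_of_nonneg (by positivity), h7,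
              div_mul_cancel₀ r (ne_of_gt hdpos)]
          have hwW : u + v ∈ WadmSet U B y₀ z_d T τ r :=
            ⟨hmem_add u v hu.1 hvm, hwdist⟩
          have hwsup : supNorm (u + v) τ T ≤ M + ε := by
            apply supNorm_le (by linarith)
            filter_upwards [hu.2, hvb] with t h1 h2 hts
            have h3 := h2 hts
            rw [hznorm] at h3
            have h5 : d - r < ε / C := by linarith
            calc ‖(u + v) t‖ ≤ ‖u t‖ + ‖v t‖ := norm_add_le _ _
              _ ≤ M + C * (d - r) := add_le_add (h1 hts) h3
              _ ≤ M + ε := by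
                  have h8 : C * (d - r) ≤ C * (ε / C) :=
                    mul_le_mul_of_nonneg_left h5.le hC.le
                  have h9 : C * (ε / C) = ε := by field_simp
                  linarith
          have h6 : MNP U B y₀ z_d T τ r ≤ supNorm (u + v) τ T := by
            rw [hMNPdef]; exact csInf_le (hbddS _) ⟨u + v, hwW, rfl⟩
          linarith
      have hMge : M ≤ MNP U B y₀ z_d T τ r := by
        by_contra hlt
        push_neg at hlt
        set M' := MNP U B y₀ z_d T τ r with hM'def
        have hM'0 : 0 ≤ M' := hMNP_nonneg r
        have hr2 : rOP U B y₀ z_d T M' τ = r := hC2 r hrpos hrle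
        set δ := min ((M - M') / C) r with hδdef
        have hδ0 : 0 < δ := lt_min (div_pos (by linarith) hC) hrpos
        have hδr : δ ≤ r := min_le_right _ _
        have hδM : M' + C * δ ≤ M := by
          have h1 : δ ≤ (M - M') / C := min_le_left _ _
          have h2 : C * δ ≤ M - M' := by
            rw [mul_comm, ← le_div_iff₀ hC]
            exact h1
          linarith
        have hdrop : rOP U B y₀ z_d T (M' + C * δ) τ ≤ r - δ := by
          apply le_of_forall_pos_le_add
          intro ε hε
          obtain ⟨x, ⟨u, hu, rfl⟩, hx⟩ := exists_lt_of_csInf_lt (hrOPne M' hM'0)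
            (show sInf _ < r + ε by
              rw [← hrOPdef, hr2]; exact lt_add_of_pos_right _ hε)
          have hxd : ‖stateT U B T τ u y₀ - z_d‖ < r + ε := hx
          set d := ‖stateT U B T τ u y₀ - z_d‖ with hddef
          rcases le_or_gt d δ with hdδ | hdδ
          · obtain ⟨v, hvm, hvb, hvi⟩ := hsteer (z_d - stateT U B T τ u y₀)
            have hwd : stateT U B T τ (u + v) y₀ = z_d := by
              rw [hstate (u + v), hJadd u v hu.1 hvm, hvi, hstate u]; abel
            have hwU : u + v ∈ UadmSet (H := H) (M' + C * δ) τ T := by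
              refine ⟨hmem_add u v hu.1 hvm, ?_⟩
              filter_upwards [hu.2, hvb] with t h1 h2 hts
              have h3 := h2 hts
              rw [norm_sub_rev] at h3
              have h7 : ‖stateT U B T τ u y₀ - z_d‖ = d := rfl
              rw [h7] at h3
              calc ‖(u + v) t‖ ≤ ‖u t‖ + ‖v t‖ := norm_add_le _ _
                _ ≤ M' + C * d := add_le_add (h1 hts) h3
                _ ≤ M' + C * δ := by nlinarith
            have h8 : rOP U B y₀ z_d T (M' + C * δ) τ ≤ 0 := by
              rw [hrOPdef]
              refine csInf_le (hbddD _) ⟨u + v, hwU, ?_⟩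
              show ‖stateT U B T τ (u + v) y₀ - z_d‖ = 0
              rw [hwd]; simp
            linarith
          · have hdpos : 0 < d := lt_trans hδ0 hdδ
            obtain ⟨v, hvm, hvb, hvi⟩ :=
              hsteer ((δ / d) • (z_d - stateT U B T τ u y₀))
            have hznorm : ‖(δ / d) • (z_d - stateT U B T τ u y₀)‖ = δ := by
              rw [norm_smul, Real.norm_eq_abs, norm_sub_rev,
                abs_of_nonneg (by positivity)]
              have h7 : ‖stateT U B T τ u y₀ - z_d‖ = d := rfl
              rw [h7]
              exact div_mul_cancel₀ δ (ne_of_gt hdpos)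
            have hwd : stateT U B T τ (u + v) y₀ - z_d =
                (1 - δ / d) • (stateT U B T τ u y₀ - z_d) := by
              have hd1 : d ≠ 0 := ne_of_gt hdpos
              rw [hstate (u + v), hJadd u v hu.1 hvm, hvi, hstate u]
              match_scalars <;> (field_simp; try ring)
            have hwdist : ‖stateT U B T τ (u + v) y₀ - z_d‖ ≤ r - δ + ε := by
              rw [hwd, norm_smul, Real.norm_eq_abs,
                abs_of_nonneg (by rw [sub_nonneg, div_le_one hdpos]; exact hdδ.le)]
              have h7 : ‖stateT U B T τ u y₀ - z_d‖ = d := rfl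
              rw [h7]
              have h4 : (1 - δ / d) * d = d - δ := by field_simp
              rw [h4]
              linarith
            have hwU : u + v ∈ UadmSet (H := H) (M' + C * δ) τ T := by
              refine ⟨hmem_add u v hu.1 hvm, ?_⟩
              filter_upwards [hu.2, hvb] with t h1 h2 hts
              have h3 := h2 hts
              rw [hznorm] at h3
              calc ‖(u + v) t‖ ≤ ‖u t‖ + ‖v t‖ := norm_add_le _ _
                _ ≤ M' + C * δ := add_le_add (h1 hts) h3
            have h9 : rOP U B y₀ z_d T (M' + C * δ) τ ≤
                ‖stateT U B T τ (u + v) y₀ - z_d‖ := by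
              rw [hrOPdef]; exact csInf_le (hbddD _) ⟨u + v, hwU, rfl⟩
            linarith
        have hfinal : rOP U B y₀ z_d T M τ ≤ r - δ :=
          le_trans (hrOP_anti (M' + C * δ) M (add_nonneg hM'0 (mul_pos hC hδ0).le) hδM) hdrop
        rw [← hrdef] at hfinal
        linarith
      linarith
  refine ⟨hC1, ?_, ?_, ?_, ?_⟩
  · rintro r ⟨hr1, hr2⟩
    exact hC2 r hr1 hr2
  · rintro M ⟨hM1, hM2⟩
    exact hC3 M hM1 hM2
  · rintro M ⟨hM1, hM2⟩
    exact hC3 M hM1 hM2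
  · rintro r ⟨hr1, hr2⟩
    exact hC2 r hr1 hr2
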